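/- Let L be a perfect Lie algebra over a field of characteristic zero, k ≥ 2 a natural number, and m a nonzero scalar that is not a negative integer. If a linear map f : L → L satisfies m·f([x₁,…,x_k]) + [x₁, f([x₂,…,x_k])] + [x₁,x₂,f([x₃,…,x_k])] + … + [x₁,…,x_{k-1}, f(x_k)] = 0 for all x₁,…,x_k ∈ L (all brackets nested to the right), then f = 0. -/

import Mathlib

open Finset

/-- Right-nested bracket `[x₁,[x₂,…,[x_k,x_{k+1}]…]]` of a list of elements. -/
def nestedBracket {L : Type*} [LieRing L] : List L → L
  | [] => 0
  | [x] => x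
  | x :: xs => ⁅x, nestedBracket xs⁆

/-- A Leibniz-derivation of order `k` of a Lie algebra. -/
def IsLeibnizDerivation {F L : Type*} [CommRing F] [LieRing L] [LieAlgebra F L] (k : ℕ)
    (P : L →ₗ[F] L) : Prop :=
  ∀ x : Fin (k + 1) → L,
    P (nestedBracket (List.ofFn x)) =
      ∑ i : Fin (k + 1), nestedBracket (List.ofFn (Function.update x i (P (x i))))

set_option linter.unusedSectionVars false
set_option linter.unusedVariables false
set_option maxHeartbeats 1000000

namespace TechAux

variable {F L : Type*} [CommRing F] [LieRing L] [LieAlgebra F L]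

def opW (F : Type*) {L : Type*} [CommRing F] [LieRing L] [LieAlgebra F L] (l : List L) :
    L →ₗ[F] L :=
  l.foldr (fun x g => (LieAlgebra.ad F L x) ∘ₗ g) LinearMap.id

@[simp] lemma opW_nil (z : L) : opW F ([] : List L) z = z := rfl

@[simp] lemma opW_cons (x : L) (l : List L) (z : L) :
    opW F (x :: l) z = ⁅x, opW F l z⁆ := rfl

lemma opW_append (l₁ l₂ : List L) (z : L) :
    opW F (l₁ ++ l₂) z = opW F l₁ (opW F l₂ z) := by
  induction l₁ with
  | nil => simp
  | cons x t ih => simp [ih]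


lemma nested_eq_opW (l : List L) (z : L) :
    nestedBracket (l ++ [z]) = opW F l z := by
  induction l with
  | nil => rfl
  | cons x t ih =>
      cases t with
      | nil => rfl
      | cons a t' =>
          rw [List.cons_append]
          rw [show nestedBracket (x :: (a :: t' ++ [z])) = ⁅x, nestedBracket (a :: t' ++ [z])⁆
            from rfl]
          rw [ih]
          rfl

def seg (c : ℕ → L) (i j : ℕ) : List L := (List.range (j - i)).map fun t => c (i + t)

@[simp] lemma seg_length (c : ℕ → L) (i j : ℕ) : (seg c i j).length = j - i := by
  simp [seg]

@[simp] lemma seg_self (c : ℕ → L) (i : ℕ) : seg c i i = [] := by simp [seg]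

lemma seg_single (c : ℕ → L) (i : ℕ) : seg c i (i+1) = [c i] := by
  have h : i + 1 - i = 1 := by omega
  rw [seg, h, show List.range 1 = [0] from rfl]
  simp

lemma seg_append (c : ℕ → L) {i p j : ℕ} (h₁ : i ≤ p) (h₂ : p ≤ j) :
    seg c i j = seg c i p ++ seg c p j := by
  have h : j - i = (p - i) + (j - p) := by omega
  rw [seg, h, List.range_add, List.map_append]
  congr 1
  rw [seg, List.map_map]
  apply List.map_congr_left
  intro a ha
  simp only [List.mem_range] at ha
  simp only [Function.comp_apply]
  congr 1
  omega

lemma seg_congr {c d : ℕ → L} {i j i' j' : ℕ} (hlen : j - i = j' - i')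
    (h : ∀ t, t < j - i → c (i + t) = d (i' + t)) : seg c i j = seg d i' j' := by
  rw [seg, seg, ← hlen]
  apply List.map_congr_left
  intro a ha
  simp only [List.mem_range] at ha
  exact h a ha


lemma seg_take (c : ℕ → L) {i j r : ℕ} (h : i + r ≤ j) :
    (seg c i j).take r = seg c i (i + r) := by
  rw [seg_append c (Nat.le_add_right i r) h]
  exact List.take_left' (by simp)

lemma seg_drop (c : ℕ → L) {i j r : ℕ} (h : i + r ≤ j) :
    (seg c i j).drop r = seg c (i + r) j := by
  rw [seg_append c (Nat.le_add_right i r) h]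
  exact List.drop_left' (by simp)



def MM (f : L →ₗ[F] L) (c : ℕ → L) (p j : ℕ) (z : L) : L :=
  opW F (seg c 0 p) (f (opW F (seg c p j) z))

section Rel

variable (f : L →ₗ[F] L) (m : F) (n : ℕ)

lemma Rseq
    (H : ∀ (xs : List L) (z : L), xs.length = n →
      m • f (opW F xs z) +
        ∑ i ∈ range n, opW F (xs.take (i+1)) (f (opW F (xs.drop (i+1)) z)) = 0)
    (c : ℕ → L) (p j : ℕ) (z : L) (hpj : p + n ≤ j) :
    m • MM f c p j z + ∑ i ∈ range n, MM f c (p + (i+1)) j z = 0 := by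
  have hxslen : (seg c p (p+n)).length = n := by simp
  have h0 := H (seg c p (p+n)) (opW F (seg c (p+n) j) z) hxslen
  have key : m • MM f c p j z + ∑ i ∈ range n, MM f c (p + (i+1)) j z
      = opW F (seg c 0 p)
          (m • f (opW F (seg c p (p+n)) (opW F (seg c (p+n) j) z)) +
            ∑ i ∈ range n, opW F ((seg c p (p+n)).take (i+1))
              (f (opW F ((seg c p (p+n)).drop (i+1)) (opW F (seg c (p+n) j) z)))) := by
    rw [map_add, map_smul, map_sum]
    congr 1
    · rw [MM, ← opW_append, ← seg_append c (Nat.le_add_right p n) hpj]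
    · apply Finset.sum_congr rfl
      intro i hi
      simp only [Finset.mem_range] at hi
      rw [seg_take c (by omega), seg_drop c (by omega)]
      rw [MM, ← opW_append, ← seg_append c (by omega) (by omega),
          ← opW_append, ← seg_append c (by omega) (by omega)]
  rw [key, h0, map_zero]

end Rel


/-- replace the letter at index `t` by the two letters `A`, `B`. -/
def splice (v : ℕ → L) (t : ℕ) (A B : L) : ℕ → L :=
  fun i => if i < t then v i else if i = t then A else if i = t+1 then B else v (i-1)

lemma seg_splice_low (v : ℕ → L) (t : ℕ) (A B : L) {i p : ℕ} (h : p ≤ t) :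
    seg (splice v t A B) i p = seg v i p := by
  apply seg_congr rfl
  intro x hx
  have : i + x < t := by omega
  simp [splice, this]

lemma seg_splice_high (v : ℕ → L) (t : ℕ) (A B : L) {i j : ℕ} (h : t + 1 ≤ i) :
    seg (splice v t A B) (i+1) (j+1) = seg v i j := by
  apply seg_congr (by omega)
  intro x hx
  have h1 : ¬ (i + 1 + x < t) := by omega
  have h2 : ¬ (i + 1 + x = t) := by omega
  have h3 : ¬ (i + 1 + x = t + 1) := by omega
  simp only [splice, if_neg h1, if_neg h2, if_neg h3]
  congr 1
  omega

lemma seg_splice_mid (v : ℕ → L) (t : ℕ) (A B : L) {i j : ℕ} (h₁ : i ≤ t) (h₂ : t < j) :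
    seg (splice v t A B) i (j+1) = seg v i t ++ A :: B :: seg v (t+1) j := by
  rw [seg_append (splice v t A B) (i := i) (p := t) (by omega) (by omega),
      seg_append (splice v t A B) (i := t) (p := t+1) (by omega) (by omega),
      seg_append (splice v t A B) (i := t+1) (p := t+2) (by omega) (by omega)]
  rw [seg_splice_low v t A B (le_refl t), seg_single, seg_single]
  have e1 : splice v t A B t = A := by simp [splice]
  have e2 : splice v t A B (t+1) = B := by simp [splice]
  have e3 : seg (splice v t A B) (t+2) (j+1) = seg v (t+1) j := by
    have := seg_splice_high v t A B (i := t+1) (j := j) (le_refl _)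
    simpa using this
  rw [e1, e2, e3]
  simp


section Merge

variable (f : L →ₗ[F] L)

/-- Jacobi/linearity: merging a bracket letter that sits inside the argument of `f`. -/
lemma merge_arg (v : ℕ → L) (t : ℕ) (A B : L) (hv : v t = ⁅A,B⁆)
    (p j : ℕ) (z : L) (hpt : p ≤ t) (htj : t < j) :
    MM f v p j z =
      MM f (splice v t A B) p (j+1) z - MM f (splice v t B A) p (j+1) z := by
  have hseg : seg v p j = seg v p t ++ v t :: seg v (t+1) j := by
    rw [seg_append v (i := p) (p := t) hpt (by omega),
        seg_append v (i := t) (p := t+1) (by omega) (by omega), seg_single]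
    simp
  rw [MM, MM, MM, seg_splice_low v t A B hpt, seg_splice_low v t B A hpt,
      seg_splice_mid v t A B hpt htj, seg_splice_mid v t B A hpt htj, hseg]
  rw [← map_sub, ← map_sub]
  congr 1
  congr 1
  have key : ∀ X Y : L, opW F (seg v p t ++ X :: Y :: seg v (t+1) j) z
      = opW F (seg v p t) ⁅X, ⁅Y, opW F (seg v (t+1) j) z⁆⁆ := by
    intro X Y
    rw [opW_append]
    simp
  rw [opW_append, opW_cons, key, key, ← map_sub, hv, lie_lie]

/-- Jacobi: merging a bracket letter that sits inside the prefix. -/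
lemma merge_pre (v : ℕ → L) (t : ℕ) (A B : L) (hv : v t = ⁅A,B⁆)
    (p j : ℕ) (z : L) (htp : t < p) (hpj : p ≤ j) :
    MM f v p j z =
      MM f (splice v t A B) (p+1) (j+1) z - MM f (splice v t B A) (p+1) (j+1) z := by
  have hseg : seg v 0 p = seg v 0 t ++ v t :: seg v (t+1) p := by
    rw [seg_append v (i := 0) (p := t) (by omega) (by omega),
        seg_append v (i := t) (p := t+1) (by omega) (by omega), seg_single]
    simp
  have hmid : ∀ X Y : L, seg (splice v t X Y) 0 (p+1) = seg v 0 t ++ X :: Y :: seg v (t+1) p := by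
    intro X Y
    have := seg_splice_mid v t X Y (i := 0) (j := p) (by omega) htp
    simpa using this
  rw [MM, MM, MM, seg_splice_high v t A B (by omega), seg_splice_high v t B A (by omega),
      hmid, hmid, hseg]
  have key : ∀ X Y : L, opW F (seg v 0 t ++ X :: Y :: seg v (t+1) p) (f (opW F (seg v p j) z))
      = opW F (seg v 0 t) ⁅X, ⁅Y, opW F (seg v (t+1) p) (f (opW F (seg v p j) z))⁆⁆ := by
    intro X Y
    rw [opW_append]
    simp
  rw [opW_append, opW_cons, key, key, ← map_sub, hv, lie_lie]

end Merge


lemma tele {M : Type*} [AddCommGroup M] (g : ℕ → M) (n s : ℕ) (h : s < n) :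
    ∑ i ∈ range n, (if i < s then 0 else g i - g (i+1)) = g s - g n := by
  induction n with
  | zero => omega
  | succ n ih =>
      rw [Finset.sum_range_succ]
      rcases Nat.lt_or_ge s n with hs | hs
      · rw [ih hs, if_neg (by omega)]
        abel
      · have hsn : s = n := by omega
        subst hsn
        rw [if_neg (by omega)]
        have : ∀ i ∈ range s, (if i < s then (0:M) else g i - g (i+1)) = 0 := by
          intro i hi
          rw [if_pos (by simpa using hi)]
        rw [Finset.sum_congr rfl this]
        simp

section KeyLemma

variable (f : L →ₗ[F] L) (m : F) (n : ℕ)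

lemma key
    (H : ∀ (xs : List L) (z : L), xs.length = n →
      m • f (opW F xs z) +
        ∑ i ∈ range n, opW F (xs.take (i+1)) (f (opW F (xs.drop (i+1)) z)) = 0)
    (v : ℕ → L) (t : ℕ) (A B : L) (hv : v t = ⁅A,B⁆) (a j : ℕ) (z : L)
    (h1 : a ≤ t) (h2 : t + 1 ≤ a + n) (h3 : a + n ≤ j) :
    MM f (splice v t A B) (t+1) (j+1) z - MM f (splice v t B A) (t+1) (j+1) z
      = MM f v (a+n) j z := by
  have htj : t < j := by omega
  set w : ℕ → L := splice v t A B with hw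
  set w' : ℕ → L := splice v t B A with hw'
  set δ : ℕ → L := fun p => MM f w p (j+1) z - MM f w' p (j+1) z with hδ
  have hRw := Rseq f m n H w a (j+1) z (by omega)
  have hRw' := Rseq f m n H w' a (j+1) z (by omega)
  have hRv := Rseq f m n H v a j z h3
  have hA : m • δ a + ∑ i ∈ range n, δ (a+(i+1)) = 0 := by
    simp only [hδ, smul_sub, Finset.sum_sub_distrib]
    rw [show m • MM f w a (j+1) z - m • MM f w' a (j+1) z +
        (∑ i ∈ range n, MM f w (a+(i+1)) (j+1) z - ∑ i ∈ range n, MM f w' (a+(i+1)) (j+1) z)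
        = (m • MM f w a (j+1) z + ∑ i ∈ range n, MM f w (a+(i+1)) (j+1) z)
          - (m • MM f w' a (j+1) z + ∑ i ∈ range n, MM f w' (a+(i+1)) (j+1) z) by abel]
    rw [hRw, hRw', sub_zero]
  have hB : m • δ a + ∑ i ∈ range n, (if i < t - a then δ (a+(i+1)) else δ (a+(i+1)+1)) = 0 := by
    have hδa : MM f v a j z = δ a := merge_arg f v t A B hv a j z h1 htj
    have hterm : ∀ i ∈ range n, MM f v (a+(i+1)) j z
        = (if i < t - a then δ (a+(i+1)) else δ (a+(i+1)+1)) := by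
      intro i hi
      simp only [Finset.mem_range] at hi
      rcases Nat.lt_or_ge i (t - a) with hc | hc
      · rw [if_pos hc]
        exact merge_arg f v t A B hv (a+(i+1)) j z (by omega) htj
      · rw [if_neg (by omega)]
        exact merge_pre f v t A B hv (a+(i+1)) j z (by omega) (by omega)
    rw [← Finset.sum_congr rfl hterm, ← hδa]
    exact hRv
  have hsum : ∑ i ∈ range n, (δ (a+(i+1)) - (if i < t - a then δ (a+(i+1)) else δ (a+(i+1)+1)))
      = δ (t+1) - δ (a+n+1) := by
    have hre : ∀ i ∈ range n,
        (δ (a+(i+1)) - (if i < t - a then δ (a+(i+1)) else δ (a+(i+1)+1)))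
        = (if i < t - a then 0 else (fun r => δ (a+1+r)) i - (fun r => δ (a+1+r)) (i+1)) := by
      intro i hi
      rcases Nat.lt_or_ge i (t - a) with hc | hc
      · rw [if_pos hc, if_pos hc, sub_self]
      · rw [if_neg (by omega), if_neg (by omega)]
        show δ (a+(i+1)) - δ (a+(i+1)+1) = δ (a+1+i) - δ (a+1+(i+1))
        congr 1 <;> congr 1 <;> omega
    rw [Finset.sum_congr rfl hre, tele (fun r => δ (a+1+r)) n (t-a) (by omega)]
    have e3 : a + 1 + (t - a) = t + 1 := by omega
    have e4 : a + 1 + n = a + n + 1 := by omega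
    rw [e3, e4]
  have hzero : δ (t+1) - δ (a+n+1) = 0 := by
    rw [← hsum, Finset.sum_sub_distrib]
    have := sub_eq_zero.mpr (hA.trans hB.symm)
    rw [show m • δ a + ∑ i ∈ range n, δ (a + (i + 1)) -
        (m • δ a + ∑ i ∈ range n, if i < t - a then δ (a + (i + 1)) else δ (a + (i + 1) + 1))
        = ∑ i ∈ range n, δ (a + (i + 1)) -
          ∑ i ∈ range n, (if i < t - a then δ (a + (i + 1)) else δ (a + (i + 1) + 1)) from by abel] at this
    exact this
  have hfinal : MM f v (a+n) j z = δ (a+n+1) :=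
    merge_pre f v t A B hv (a+n) j z (by omega) h3
  have := sub_eq_zero.mp hzero
  rw [hfinal, ← this]


lemma slide
    (H : ∀ (xs : List L) (z : L), xs.length = n →
      m • f (opW F xs z) +
        ∑ i ∈ range n, opW F (xs.take (i+1)) (f (opW F (xs.drop (i+1)) z)) = 0)
    (c : ℕ → L) (p j : ℕ) (z : L) (hn : 2 ≤ n) (hp : n ≤ p) (hpj : p + 1 ≤ j)
    (hbr : ∃ A B : L, c (p-1) = ⁅A,B⁆) :
    MM f c p j z = MM f c (p+1) j z := by
  obtain ⟨A, B, hAB⟩ := hbr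
  obtain ⟨a1, ha1⟩ : ∃ a, p = a + n := ⟨p - n, by omega⟩
  obtain ⟨t, ht⟩ : ∃ t, p = t + 1 := ⟨p - 1, by omega⟩
  have hct : c t = ⁅A, B⁆ := by rw [show t = p - 1 by omega]; exact hAB
  have k1 := key f m n H c t A B hct a1 j z (by omega) (by omega) (by omega)
  have k2 := key f m n H c t A B hct (a1+1) j z (by omega) (by omega) (by omega)
  have e : MM f c (a1+n) j z = MM f c (a1+1+n) j z := by rw [← k1, ← k2]
  have e1 : p = a1 + n := ha1
  have e2 : p + 1 = a1 + 1 + n := by omega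
  rw [e2, e1]
  exact e

lemma collapse (hn : 2 ≤ n) (hm0 : m ≠ 0) (hmn : m + (n:F) ≠ 0)
    (H : ∀ (xs : List L) (z : L), xs.length = n →
      m • f (opW F xs z) +
        ∑ i ∈ range n, opW F (xs.take (i+1)) (f (opW F (xs.drop (i+1)) z)) = 0)
    (c : ℕ → L) (z : L)
    (hbr : ∀ i, n - 1 ≤ i → i ≤ 2*n - 1 → ∃ A B : L, c i = ⁅A,B⁆)
    [NoZeroSMulDivisors F L] :
    f (opW F (seg c 0 (2*n)) z) = 0 := by
  have step1 : ∀ p, n ≤ p → p ≤ 2*n → MM f c p (2*n) z = MM f c n (2*n) z := by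
    intro p hp
    induction p, hp using Nat.le_induction with
    | base => intro _; rfl
    | succ p hp ih =>
        intro hp2
        have hs := slide f m n H c p (2*n) z hn hp (by omega)
          (hbr (p-1) (by omega) (by omega))
        rw [← hs]
        exact ih (by omega)
  have step2 : MM f c n (2*n) z = 0 := by
    have hR := Rseq f m n H c n (2*n) z (by omega)
    have hterm : ∀ i ∈ range n, MM f c (n+(i+1)) (2*n) z = MM f c n (2*n) z := by
      intro i hi
      simp only [Finset.mem_range] at hi
      exact step1 (n+(i+1)) (by omega) (by omega)
    rw [Finset.sum_congr rfl hterm, Finset.sum_const, Finset.card_range] at hR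
    rw [← Nat.cast_smul_eq_nsmul F, ← add_smul] at hR
    exact (NoZeroSMulDivisors.eq_zero_or_eq_zero_of_smul_eq_zero hR).resolve_left hmn
  have step3 : ∀ d p, n ≤ p + d → p ≤ 2*n → MM f c p (2*n) z = 0 := by
    intro d
    induction d with
    | zero =>
        intro p h1 h2
        rw [step1 p (by omega) h2]
        exact step2
    | succ d ih =>
        intro p h1 h2
        by_cases hcase : n ≤ p + d
        · exact ih p hcase h2
        · have hR := Rseq f m n H c p (2*n) z (by omega)
          have hterm : ∀ i ∈ range n, MM f c (p+(i+1)) (2*n) z = 0 := by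
            intro i hi
            simp only [Finset.mem_range] at hi
            exact ih (p+(i+1)) (by omega) (by omega)
          rw [Finset.sum_congr rfl hterm, Finset.sum_const, smul_zero, add_zero] at hR
          exact (NoZeroSMulDivisors.eq_zero_or_eq_zero_of_smul_eq_zero hR).resolve_left hm0
  have h0 := step3 n 0 (by omega) (by omega)
  rw [MM] at h0
  simpa using h0

end KeyLemma

end TechAux


theorem technical_lemma_perfect
    {F L : Type*} [Field F] [CharZero F] [LieRing L] [LieAlgebra F L]
    (hperf : ⁅(⊤ : LieIdeal F L), (⊤ : LieIdeal F L)⁆ = ⊤)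
    {k : ℕ} (hk : 2 ≤ k) {m : F} (hm0 : m ≠ 0)
    (hm : ∀ n : ℕ, 0 < n → m ≠ -(n : F))
    (f : L →ₗ[F] L)
    (hf : ∀ x : Fin k → L,
      m • f (nestedBracket (List.ofFn x)) +
        ∑ i ∈ Finset.range (k - 1),
          nestedBracket ((List.ofFn x).take (i + 1) ++
            [f (nestedBracket ((List.ofFn x).drop (i + 1)))]) = 0) :
    f = 0 := by
  classical
  open TechAux in
  obtain ⟨n, rfl⟩ : ∃ n, k = n + 1 := ⟨k - 1, by omega⟩
  have hn1 : 1 ≤ n := by omega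
  -- the brackets span everything
  have hspan : Submodule.span F {x : L | ∃ a b : L, ⁅a,b⁆ = x} = ⊤ := by
    have h := LieSubmodule.lieIdeal_oper_eq_linear_span' (R := F) (L := L) (M := L)
      (I := ⊤) (N := ⊤)
    rw [hperf] at h
    have h2 : {x : L | ∃ a ∈ (⊤ : LieIdeal F L), ∃ b ∈ (⊤ : LieSubmodule F L L), ⁅a,b⁆ = x}
        = {x : L | ∃ a b : L, ⁅a,b⁆ = x} := by
      ext x
      simp
    rw [h2] at h
    rw [← h]
    simp
  have vanish : ∀ (g : L →ₗ[F] L), (∀ a b : L, g ⁅a,b⁆ = 0) → g = 0 := by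
    intro g hg
    have hle : (⊤ : Submodule F L) ≤ LinearMap.ker g := by
      rw [← hspan, Submodule.span_le]
      rintro x ⟨a, b, rfl⟩
      exact hg a b
    ext x
    exact hle Submodule.mem_top
  -- list form of the hypothesis
  have hfL : ∀ (xs : List L) (z : L), xs.length = n →
      m • f (opW F xs z) +
        ∑ i ∈ range n, opW F (xs.take (i+1)) (f (opW F (xs.drop (i+1)) z)) = 0 := by
    intro xs z hlen
    have hlen2 : (xs ++ [z]).length = n + 1 := by simp [hlen]
    have hx := hf (fun i : Fin (n+1) => (xs ++ [z]).getD (i : ℕ) 0)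
    have hofn : List.ofFn (fun i : Fin (n+1) => (xs ++ [z]).getD (i : ℕ) 0) = xs ++ [z] := by
      apply List.ext_getElem
      · simp [hlen2]
      · intro i h1 h2
        simp only [List.getElem_ofFn]
        exact List.getD_eq_getElem _ 0 h2
    rw [hofn] at hx
    rw [show n + 1 - 1 = n from rfl] at hx
    have hterm : ∀ i ∈ range n,
        nestedBracket ((xs ++ [z]).take (i+1) ++
          [f (nestedBracket ((xs ++ [z]).drop (i+1)))])
        = opW F (xs.take (i+1)) (f (opW F (xs.drop (i+1)) z)) := by
      intro i hi
      simp only [Finset.mem_range] at hi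
      rw [List.take_append_of_le_length (by omega), List.drop_append_of_le_length (by omega)]
      rw [nested_eq_opW (F := F), nested_eq_opW (F := F)]
    rw [Finset.sum_congr rfl hterm] at hx
    rw [nested_eq_opW (F := F)] at hx
    exact hx
  by_cases hn2 : 2 ≤ n
  · -- main case k ≥ 3
    have hmn : m + (n : F) ≠ 0 := by
      intro hc
      exact hm n (by omega) (eq_neg_of_add_eq_zero_left hc)
    -- vanishing on words with a block of n+1 brackets
    have G : ∀ (r : ℕ), ∀ (U C : List L) (ab : List (L × L)) (z : L),
        U.length = n - 1 → C.length = r → ab.length = n + 1 - r → r ≤ n + 1 →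
        f (opW F (U ++ ab.map (fun p => ⁅p.1, p.2⁆) ++ C) z) = 0 := by
      intro r
      induction r with
      | zero =>
          intro U C ab z hU hC hab _
          have hCnil : C = [] := List.length_eq_zero_iff.mp hC
          subst hCnil
          rw [List.append_nil]
          have hwlen : (U ++ List.map (fun p => ⁅p.1, p.2⁆) ab).length = 2 * n := by
            simp only [List.length_append, List.length_map, hU, hab]
            omega
          have hseg : seg (fun i => (U ++ List.map (fun p => ⁅p.1, p.2⁆) ab).getD i 0) 0 (2*n)
              = U ++ List.map (fun p => ⁅p.1, p.2⁆) ab := by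
            apply List.ext_getElem
            · simp [hwlen]
            · intro i h1 h2
              simp only [seg, List.getElem_map, List.getElem_range]
              simp only [Nat.zero_add]
              exact List.getD_eq_getElem _ 0 h2
          have hbr : ∀ i, n - 1 ≤ i → i ≤ 2*n - 1 → ∃ A B : L,
              (fun i => (U ++ List.map (fun p => ⁅p.1, p.2⁆) ab).getD i 0) i = ⁅A,B⁆ := by
            intro i hi1 hi2
            have hilen : i < (U ++ List.map (fun p => ⁅p.1, p.2⁆) ab).length := by omega
            have hiU : U.length ≤ i := by omega
            have habl : (List.map (fun p : L × L => ⁅p.1, p.2⁆) ab).length = ab.length := by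
              simp
            have hab2 : i - U.length < ab.length := by omega
            refine ⟨(ab[i - U.length]'hab2).1, (ab[i - U.length]'hab2).2, ?_⟩
            show (U ++ List.map (fun p => ⁅p.1, p.2⁆) ab).getD i 0 = _
            rw [List.getD_eq_getElem _ 0 hilen, List.getElem_append_right hiU]
            simp
          have hcol := collapse f m n hn2 hm0 hmn hfL
            (fun i => (U ++ List.map (fun p => ⁅p.1, p.2⁆) ab).getD i 0) z hbr
          rw [hseg] at hcol
          exact hcol
      | succ r ih =>
          intro U C ab z hU hC hab hr
          match C, hC with
          | x :: C', hC =>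
            have hC' : C'.length = r := by simpa using hC
            have hgoal : opW F (U ++ List.map (fun p => ⁅p.1, p.2⁆) ab ++ (x :: C')) z
                = opW F (U ++ List.map (fun p => ⁅p.1, p.2⁆) ab) ⁅x, opW F C' z⁆ := by
              rw [opW_append, opW_cons]
            rw [hgoal]
            have hglin : ∀ y : L,
                f (opW F (U ++ List.map (fun p => ⁅p.1, p.2⁆) ab) ⁅y, opW F C' z⁆)
                = (-((f ∘ₗ opW F (U ++ List.map (fun p => ⁅p.1, p.2⁆) ab)) ∘ₗ
                    (LieAlgebra.ad F L (opW F C' z)))) y := by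
              intro y
              simp only [LinearMap.neg_apply, LinearMap.comp_apply, LieAlgebra.ad_apply]
              rw [← lie_skew, map_neg, map_neg]
            rw [hglin]
            have hzero : (-((f ∘ₗ opW F (U ++ List.map (fun p => ⁅p.1, p.2⁆) ab)) ∘ₗ
                (LieAlgebra.ad F L (opW F C' z)))) = 0 := by
              apply vanish
              intro a b
              rw [← hglin]
              have inner : ⁅(⁅a,b⁆ : L), opW F C' z⁆ = opW F ([⁅a,b⁆] ++ C') z := by
                rw [opW_append]
                rfl
              have heq : opW F (U ++ List.map (fun p => ⁅p.1, p.2⁆) ab) ⁅(⁅a,b⁆ : L), opW F C' z⁆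
                  = opW F (U ++ (ab ++ [(a,b)]).map (fun p => ⁅p.1, p.2⁆) ++ C') z := by
                rw [inner, ← opW_append]
                congr 1
                simp
              rw [heq]
              exact ih U C' (ab ++ [(a,b)]) z hU hC' (by simp [hab]; omega) (by omega)
            rw [hzero]
            rfl
    have K2n : ∀ (w : List L) (z : L), w.length = 2*n → f (opW F w z) = 0 := by
      intro w z hw
      have := G (n+1) (w.take (n-1)) (w.drop (n-1)) [] z
        (by rw [List.length_take]; omega) (by rw [List.length_drop]; omega)
        (by simp) (le_refl _)
      simpa using this
    -- descend to length 0
    have desc : ∀ j : ℕ, (∀ (w : List L) (z : L), w.length = j + 1 → f (opW F w z) = 0) →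
        ∀ (w : List L) (z : L), w.length = j → f (opW F w z) = 0 := by
      intro j hj w z hw
      have hzero : (f ∘ₗ opW F w) = 0 := by
        apply vanish
        intro a b
        simp only [LinearMap.comp_apply]
        rw [show opW F w ⁅a, b⁆ = opW F (w ++ [a]) b by rw [opW_append]; rfl]
        exact hj (w ++ [a]) b (by simp [hw])
      have := congrArg (fun g : L →ₗ[F] L => g z) hzero
      simpa using this
    have down : ∀ d : ℕ, ∀ (w : List L) (z : L), w.length = 2*n - d → f (opW F w z) = 0 := by
      intro d
      induction d with
      | zero => intro w z hw; exact K2n w z (by omega)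
      | succ d ih =>
          by_cases hcase : 2*n - d = 0
          · intro w z hw
            exact ih w z (by omega)
          · have : 2*n - d = (2*n - (d+1)) + 1 := by omega
            rw [this] at ih
            exact desc (2*n - (d+1)) ih
    ext z
    have := down (2*n) [] z (by simp)
    simpa using this
  · -- case k = 2
    have hn : n = 1 := by omega
    subst hn
    have h2 : ∀ x z : L, m • f ⁅x, z⁆ + ⁅x, f z⁆ = 0 := by
      intro x z
      have := hfL [x] z rfl
      simpa using this
    have e : ∀ A B zz : L, (m*m) • f ⁅A, ⁅B, zz⁆⁆ = ⁅A, ⁅B, f zz⁆⁆ := by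
      intro A B zz
      have h1' : m • f ⁅A, ⁅B, zz⁆⁆ = -⁅A, f ⁅B, zz⁆⁆ :=
        eq_neg_of_add_eq_zero_left (h2 A ⁅B, zz⁆)
      have hB' : m • f ⁅B, zz⁆ = -⁅B, f zz⁆ :=
        eq_neg_of_add_eq_zero_left (h2 B zz)
      calc (m*m) • f ⁅A, ⁅B, zz⁆⁆ = m • (m • f ⁅A, ⁅B, zz⁆⁆) := mul_smul m m _
        _ = m • (-⁅A, f ⁅B, zz⁆⁆) := by rw [h1']
        _ = -⁅A, m • f ⁅B, zz⁆⁆ := by rw [smul_neg, lie_smul]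
        _ = -⁅A, -⁅B, f zz⁆⁆ := by rw [hB']
        _ = ⁅A, ⁅B, f zz⁆⁆ := by rw [lie_neg, neg_neg]
    have ebr : ∀ A B zz : L, f ⁅⁅A, B⁆, zz⁆ = 0 := by
      intro A B zz
      have ediff : (m*m) • f ⁅⁅A, B⁆, zz⁆ = ⁅⁅A, B⁆, f zz⁆ := by
        rw [lie_lie, map_sub, smul_sub, e A B zz, e B A zz, lie_lie]
      have hbr := h2 ⁅A, B⁆ zz
      rw [← ediff, ← add_smul] at hbr
      have hm1 : m ≠ -1 := by simpa using hm 1 one_pos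
      have hne : m + m*m ≠ 0 := by
        intro hc
        have hfac : m * (1 + m) = 0 := by linear_combination hc
        rcases mul_eq_zero.mp hfac with h | h
        · exact hm0 h
        · exact hm1 (by linear_combination h)
      exact (smul_eq_zero.mp hbr).resolve_left hne
    have hcz : ∀ zz c : L, f ⁅c, zz⁆ = 0 := by
      intro zz
      have hzero : (-(f ∘ₗ (LieAlgebra.ad F L zz))) = 0 := by
        apply vanish
        intro a b
        simp only [LinearMap.neg_apply, LinearMap.comp_apply, LieAlgebra.ad_apply]
        rw [← lie_skew, map_neg, neg_neg]
        exact ebr a b zz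
      intro c
      have := congrArg (fun g : L →ₗ[F] L => g c) hzero
      simp only [LinearMap.neg_apply, LinearMap.comp_apply, LieAlgebra.ad_apply,
        LinearMap.zero_apply, neg_eq_zero] at this
      rw [← lie_skew, map_neg, this, neg_zero]
    apply vanish
    intro a b
    exact hcz b a
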